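/- Let V be a finite-dimensional real vector space and L ⊆ V the ℤ-span of an ℝ-basis of V. (a) If 𝒞 is a cofan in L, then 𝒞_ℝ = {conv(σ) : σ ∈ 𝒞} is a cofan of real cones in V: if ν is a face of μ ∈ 𝒞_ℝ then μ − ν ∈ 𝒞_ℝ, and for μ, μ′ ∈ 𝒞_ℝ the Minkowski sum μ + μ′ equals μ − ν for some face ν of μ. (b) If Δ is a fan of real cones in V, then the set of all faces of the integral cones τ ∩ L for τ ∈ Δ is a fan in L. -/

import Mathlib

open Pointwise

/-- An integral cone: a subset containing `0` and closed under addition. -/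
def IsCone {L : Type*} [AddCommMonoid L] (σ : Set L) : Prop :=
  0 ∈ σ ∧ ∀ a ∈ σ, ∀ b ∈ σ, a + b ∈ σ

/-- A face of a cone `σ`: a nonempty subset `τ ⊆ σ` such that for `a, b ∈ σ`,
`a + b ∈ τ` if and only if `a ∈ τ` and `b ∈ τ`. -/
def IsFace {L : Type*} [AddCommMonoid L] (σ τ : Set L) : Prop :=
  τ.Nonempty ∧ τ ⊆ σ ∧ ∀ a ∈ σ, ∀ b ∈ σ, (a + b ∈ τ ↔ a ∈ τ ∧ b ∈ τ)

/-- A real cone in a real vector space: contains `0`, closed under addition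
and under multiplication by nonnegative scalars. -/
def IsRealCone {V : Type*} [AddCommGroup V] [Module ℝ V] (μ : Set V) : Prop :=
  0 ∈ μ ∧ (∀ a ∈ μ, ∀ b ∈ μ, a + b ∈ μ) ∧ ∀ r : ℝ, 0 ≤ r → ∀ x ∈ μ, r • x ∈ μ

/-- A cofan of integral cones. -/
def IsCofan {L : Type*} [AddCommGroup L] (C : Set (Set L)) : Prop :=
  (∀ σ ∈ C, IsCone σ) ∧
  (∀ σ ∈ C, ∀ τ : Set L, IsFace σ τ → σ - τ ∈ C) ∧
  (∀ σ ∈ C, ∀ σ' ∈ C, ∃ τ : Set L, IsFace σ τ ∧ σ + σ' = σ - τ)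

/-- A cofan of real cones. -/
def IsRealCofan {V : Type*} [AddCommGroup V] [Module ℝ V] (C : Set (Set V)) : Prop :=
  (∀ μ ∈ C, IsRealCone μ) ∧
  (∀ μ ∈ C, ∀ ν : Set V, IsFace μ ν → μ - ν ∈ C) ∧
  (∀ μ ∈ C, ∀ μ' ∈ C, ∃ ν : Set V, IsFace μ ν ∧ μ + μ' = μ - ν)

/-- A fan of real cones. -/
def IsRealFan {V : Type*} [AddCommGroup V] [Module ℝ V] (Δ : Set (Set V)) : Prop :=
  (∀ μ ∈ Δ, IsRealCone μ) ∧
  (∀ μ ∈ Δ, ∀ ν : Set V, IsFace μ ν → ν ∈ Δ) ∧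
  (∀ μ ∈ Δ, ∀ μ' ∈ Δ, IsFace μ (μ ∩ μ') ∧ IsFace μ' (μ ∩ μ'))

/-- A fan of integral cones. -/
def IsIntegralFan {L : Type*} [AddCommMonoid L] (Δ : Set (Set L)) : Prop :=
  (∀ σ ∈ Δ, IsCone σ) ∧
  (∀ σ ∈ Δ, ∀ τ : Set L, IsFace σ τ → τ ∈ Δ) ∧
  (∀ σ ∈ Δ, ∀ σ' ∈ Δ, IsFace σ (σ ∩ σ') ∧ IsFace σ' (σ ∩ σ'))

section Aux
variable {M : Type*} [AddCommMonoid M]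

theorem IsFace.zero_mem' {σ τ : Set M} (h0 : (0:M) ∈ σ) (h : IsFace σ τ) : (0:M) ∈ τ := by
  obtain ⟨y, hy⟩ := h.1
  exact ((h.2.2 y (h.2.1 hy) 0 h0).mp (by simpa using hy)).2

theorem IsCone.face {σ τ : Set M} (hσ : IsCone σ) (h : IsFace σ τ) : IsCone τ :=
  ⟨h.zero_mem' hσ.1, fun a ha b hb => (h.2.2 a (h.2.1 ha) b (h.2.1 hb)).mpr ⟨ha, hb⟩⟩

theorem IsFace.trans {σ τ ρ : Set M} (h1 : IsFace σ τ) (h2 : IsFace τ ρ) : IsFace σ ρ := by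
  refine ⟨h2.1, h2.2.1.trans h1.2.1, fun a ha b hb => ?_⟩
  constructor
  · intro hab
    have h' := (h1.2.2 a ha b hb).mp (h2.2.1 hab)
    exact (h2.2.2 a h'.1 b h'.2).mp hab
  · rintro ⟨ha', hb'⟩
    exact (h2.2.2 a (h2.2.1 ha') b (h2.2.1 hb')).mpr ⟨ha', hb'⟩

theorem IsCone.sum_mem {σ : Set M} (hσ : IsCone σ) {κ : Type*} {t : Finset κ} {f : κ → M}
    (hf : ∀ i ∈ t, f i ∈ σ) : ∑ i ∈ t, f i ∈ σ := by
  classical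
  induction t using Finset.induction_on with
  | empty => simpa using hσ.1
  | @insert a s ha ih =>
    rw [Finset.sum_insert ha]
    exact hσ.2 _ (hf a (by simp)) _ (ih fun i hi => hf i (by simp [hi]))

theorem IsCone.nsmul_mem {σ : Set M} (hσ : IsCone σ) {x : M} (hx : x ∈ σ) (n : ℕ) :
    n • x ∈ σ := by
  induction n with
  | zero => simpa using hσ.1
  | succ k ih => rw [succ_nsmul]; exact hσ.2 _ ih _ hx

theorem IsFace.sum_mem {σ τ : Set M} (hσ : IsCone σ) (hτ : IsFace σ τ) {κ : Type*}
    {t : Finset κ} {f : κ → M} (hf : ∀ i ∈ t, f i ∈ σ) (hs : ∑ i ∈ t, f i ∈ τ) :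
    ∀ i ∈ t, f i ∈ τ := by
  classical
  induction t using Finset.induction_on with
  | empty => simp
  | @insert a s ha ih =>
    rw [Finset.sum_insert ha] at hs
    have h1 := (hτ.2.2 _ (hf a (by simp)) _ (hσ.sum_mem fun i hi => hf i (by simp [hi]))).mp hs
    intro i hi
    rcases Finset.mem_insert.mp hi with rfl | hi'
    · exact h1.1
    · exact ih (fun j hj => hf j (by simp [hj])) h1.2 i hi'

end Aux

section RealAux
variable {V : Type*} [AddCommGroup V] [Module ℝ V]

theorem IsRealCone.isCone {μ : Set V} (h : IsRealCone μ) : IsCone μ := ⟨h.1, h.2.1⟩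

theorem IsRealCone.convex {μ : Set V} (h : IsRealCone μ) : Convex ℝ μ := by
  intro x hx y hy a b ha hb _
  exact h.2.1 _ (h.2.2 a ha x hx) _ (h.2.2 b hb y hy)

theorem IsCone.realCone_convexHull {σ : Set V} (hσ : IsCone σ) :
    IsRealCone (convexHull ℝ σ) := by
  have h0 : (0:V) ∈ convexHull ℝ σ := subset_convexHull ℝ σ hσ.1
  have hσσ : σ + σ = σ := by
    apply subset_antisymm
    · rintro _ ⟨a, ha, b, hb, rfl⟩
      exact hσ.2 a ha b hb
    · intro x hx
      exact ⟨x, hx, 0, hσ.1, by simp⟩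
  have hadd : ∀ a ∈ convexHull ℝ σ, ∀ b ∈ convexHull ℝ σ, a + b ∈ convexHull ℝ σ := by
    intro a ha b hb
    have : a + b ∈ convexHull ℝ σ + convexHull ℝ σ := Set.add_mem_add ha hb
    rwa [← convexHull_add, hσσ] at this
  refine ⟨h0, hadd, fun r hr x hx => ?_⟩
  set n := ⌈r⌉₊ with hn
  have hrn : r ≤ n := Nat.le_ceil r
  rcases Nat.eq_zero_or_pos n with h0n | hpos
  · have : r = 0 := le_antisymm (by simpa [h0n] using hrn) hr
    simpa [this] using h0
  · have hcone : IsCone (convexHull ℝ σ) := ⟨h0, hadd⟩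
    have hnx : (n:ℝ) • x ∈ convexHull ℝ σ := by
      rw [Nat.cast_smul_eq_nsmul]
      exact hcone.nsmul_mem hx n
    have hne : (n:ℝ) ≠ 0 := by positivity
    have : r • x = (r / n) • ((n:ℝ) • x) := by
      rw [smul_smul, div_mul_cancel₀ _ hne]
    rw [this]
    exact (convex_convexHull ℝ σ).smul_mem_of_zero_mem h0 hnx
      ⟨div_nonneg hr (by positivity), by rw [div_le_one (by positivity)]; exact hrn⟩

theorem IsRealCone.face {μ ν : Set V} (hμ : IsRealCone μ) (h : IsFace μ ν) :
    IsRealCone ν := by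
  have hcone : IsCone ν := hμ.isCone.face h
  refine ⟨hcone.1, hcone.2, fun r hr x hx => ?_⟩
  rcases eq_or_lt_of_le hr with rfl | hrpos
  · simpa using hcone.1
  · set n := ⌈r⌉₊ with hn
    have hrn : r ≤ n := Nat.le_ceil r
    have hnx : (n:ℝ) • x ∈ ν := by
      rw [Nat.cast_smul_eq_nsmul]; exact hcone.nsmul_mem hx n
    have hsplit : (n:ℝ) • x = r • x + ((n:ℝ) - r) • x := by
      rw [← add_smul]; ring_nf
    have hxμ : x ∈ μ := h.2.1 hx
    exact ((h.2.2 _ (hμ.2.2 r hr x hxμ) _ (hμ.2.2 _ (by linarith) x hxμ)).mp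
      (hsplit ▸ hnx)).1

end RealAux

theorem exists_eps {κ : Type*} (t : Finset κ) (c A : κ → ℝ) (hA : ∀ i ∈ t, 0 ≤ A i) :
    ∃ ε : ℝ, 0 < ε ∧ ∀ i ∈ t, 0 < c i → ε * A i < c i := by
  classical
  set G : κ → ℝ := fun i => if 0 < c i ∧ i ∈ t then c i / (A i + 1) else 1 with hG
  set s : Finset ℝ := insert 1 (t.image G) with hs
  have hsne : s.Nonempty := ⟨1, by simp [hs]⟩
  have hpos : ∀ x ∈ s, (0:ℝ) < x := by
    intro x hx
    rw [hs] at hx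
    rcases Finset.mem_insert.mp hx with h | h
    · rw [h]; norm_num
    · obtain ⟨i, hi, hGi⟩ := Finset.mem_image.mp h
      rw [← hGi, hG]
      dsimp only
      split_ifs with h'
      · exact div_pos h'.1 (by have := hA i hi; linarith)
      · norm_num
  refine ⟨s.min' hsne, hpos _ (s.min'_mem hsne), ?_⟩
  · intro i hi hci
    have hle : s.min' hsne ≤ G i := Finset.min'_le _ _
      (by rw [hs]; exact Finset.mem_insert_of_mem (Finset.mem_image_of_mem G hi))
    have hAi := hA i hi
    have hGi : G i = c i / (A i + 1) := by rw [hG]; simp [hci, hi]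
    calc s.min' hsne * A i ≤ G i * A i := mul_le_mul_of_nonneg_right hle hAi
      _ < G i * (A i + 1) := by
          apply mul_lt_mul_of_pos_left (lt_add_one _)
          rw [hGi]; exact div_pos hci (by linarith)
      _ = c i := by rw [hGi]; field_simp

theorem rat_relation {V : Type*} [AddCommGroup V] [Module ℝ V] {ι : Type*} [Fintype ι]
    (b : Module.Basis ι ℝ V) {κ : Type*} (t : Finset κ)
    (v : κ → V) (hv : ∀ i ∈ t, v i ∈ Submodule.span ℤ (Set.range ⇑b))
    (c : κ → ℝ) (hc : ∀ i ∈ t, 0 ≤ c i) (hrel : ∑ i ∈ t, c i • v i = 0) :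
    ∃ S : κ → ℕ, (∀ i ∈ t, 0 < c i → 0 < S i) ∧ ∑ i ∈ t, (S i : ℝ) • v i = 0 := by
  classical
  have hg : ∀ i ∈ t, ∃ g : ι → ℤ, ∑ j, g j • b j = v i := by
    intro i hi
    exact (Submodule.mem_span_range_iff_exists_fun ℤ).mp (hv i hi)
  choose! g hgspec using hg
  have hexp : ∀ w : κ → ℝ, ∑ i ∈ t, w i • v i
      = ∑ j, (∑ i ∈ t, w i * (g i j : ℝ)) • b j := by
    intro w
    calc ∑ i ∈ t, w i • v i = ∑ i ∈ t, ∑ j, (w i * (g i j : ℝ)) • b j := by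
          refine Finset.sum_congr rfl fun i hi => ?_
          rw [← hgspec i hi, Finset.smul_sum]
          refine Finset.sum_congr rfl fun j _ => ?_
          rw [← Int.cast_smul_eq_zsmul ℝ, smul_smul]
      _ = ∑ j, ∑ i ∈ t, (w i * (g i j : ℝ)) • b j := Finset.sum_comm
      _ = ∑ j, (∑ i ∈ t, w i * (g i j : ℝ)) • b j := by
          exact Finset.sum_congr rfl fun j _ => (Finset.sum_smul).symm
  have hcoord : ∀ jj, ∑ i ∈ t, c i * (g i jj : ℝ) = 0 := by
    have h2 : ∑ j, (∑ i ∈ t, c i * (g i j : ℝ)) • b j = 0 := by rw [← hexp c, hrel]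
    exact fun jj => Fintype.linearIndependent_iff.mp b.linearIndependent _ h2 jj
  set E := Submodule.span ℚ (c '' ↑t) with hE
  haveI : FiniteDimensional ℚ E := FiniteDimensional.span_of_finite ℚ ((t : Set κ).toFinite.image c)
  set B := Module.finBasis ℚ E with hB
  have hmem : ∀ i ∈ t, c i ∈ E := fun i hi => Submodule.subset_span ⟨i, hi, rfl⟩
  set r : κ → Fin (Module.finrank ℚ E) → ℚ :=
    fun i => if hi : i ∈ t then fun α => B.repr ⟨c i, hmem i hi⟩ α else 0 with hr
  have hcr : ∀ i ∈ t, c i = ∑ α, (r i α : ℝ) * ((B α : ℝ)) := by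
    intro i hi
    have h1 : (⟨c i, hmem i hi⟩ : E) = ∑ α, B.repr ⟨c i, hmem i hi⟩ α • B α :=
      (B.sum_repr _).symm
    have h2 := congrArg (E.subtype) h1
    rw [map_sum] at h2
    simp only [Submodule.coe_subtype] at h2
    rw [h2]
    refine Finset.sum_congr rfl fun α _ => ?_
    rw [hr]
    simp only [hi, dif_pos]
    rw [SetLike.val_smul, Rat.smul_def]
  have hBli : LinearIndependent ℚ (fun α => ((B α : ℝ))) := by
    have := B.linearIndependent.map' E.subtype (Submodule.ker_subtype E)
    exact this
  have hrq : ∀ jj α, ∑ i ∈ t, r i α * (g i jj : ℚ) = 0 := by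
    intro jj
    have h2 : ∑ α, ((∑ i ∈ t, r i α * (g i jj : ℚ)) : ℚ) • ((B α : ℝ)) = 0 := by
      have key : ∑ α, ((∑ i ∈ t, r i α * (g i jj : ℚ)) : ℚ) • ((B α : ℝ))
          = ∑ i ∈ t, c i * (g i jj : ℝ) := by
        calc ∑ α, ((∑ i ∈ t, r i α * (g i jj : ℚ)) : ℚ) • ((B α : ℝ))
            = ∑ α, ∑ i ∈ t, ((r i α : ℝ) * (g i jj : ℝ)) * (B α : ℝ) := by
              refine Finset.sum_congr rfl fun α _ => ?_
              rw [Rat.smul_def]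
              push_cast
              rw [Finset.sum_mul]
          _ = ∑ i ∈ t, ∑ α, ((r i α : ℝ) * (g i jj : ℝ)) * (B α : ℝ) := Finset.sum_comm
          _ = ∑ i ∈ t, c i * (g i jj : ℝ) := by
              refine Finset.sum_congr rfl fun i hi => ?_
              rw [hcr i hi, Finset.sum_mul]
              refine Finset.sum_congr rfl fun α _ => by ring
      rw [key, hcoord jj]
    exact fun α => Fintype.linearIndependent_iff.mp hBli _ h2 α
  set A : κ → ℝ := fun i => ∑ α, |(r i α : ℝ)| with hA
  obtain ⟨ε, hε, hεlt⟩ := exists_eps t c A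
    (fun i hi => Finset.sum_nonneg fun α _ => abs_nonneg _)
  choose T hTspec using fun α => exists_rat_near ((B α : ℝ)) hε
  set q : κ → ℚ := fun i => ∑ α, T α * r i α with hq
  have hqpos : ∀ i ∈ t, 0 < c i → 0 < q i := by
    intro i hi hci
    have hdiff : c i - (q i : ℝ) = ∑ α, (((B α : ℝ)) - (T α : ℝ)) * (r i α : ℝ) := by
      rw [hcr i hi, hq]
      push_cast
      rw [← Finset.sum_sub_distrib]
      refine Finset.sum_congr rfl fun α _ => by ring
    have habs : |c i - (q i : ℝ)| ≤ ε * A i := by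
      rw [hdiff]
      calc |∑ α, (((B α : ℝ)) - (T α : ℝ)) * (r i α : ℝ)|
          ≤ ∑ α, |(((B α : ℝ)) - (T α : ℝ)) * (r i α : ℝ)| := Finset.abs_sum_le_sum_abs _ _
        _ ≤ ∑ α, ε * |(r i α : ℝ)| := by
            refine Finset.sum_le_sum fun α _ => ?_
            rw [abs_mul]
            exact mul_le_mul_of_nonneg_right (le_of_lt (hTspec α)) (abs_nonneg _)
        _ = ε * A i := by rw [hA, Finset.mul_sum]
    have hlt := hεlt i hi hci
    have h1 : c i - (q i : ℝ) ≤ ε * A i := le_trans (le_abs_self _) habs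
    have : (0:ℝ) < (q i : ℝ) := by linarith
    exact_mod_cast this
  have hq0 : ∀ i ∈ t, c i = 0 → q i = 0 := by
    intro i hi hci
    have hz : (⟨c i, hmem i hi⟩ : E) = 0 := by
      exact Subtype.ext (by simpa using hci)
    have hr0 : ∀ α, r i α = 0 := by
      intro α
      rw [hr]
      simp only [hi, dif_pos, hz]
      simp
    rw [hq]
    simp [hr0]
  have hqnn : ∀ i ∈ t, 0 ≤ q i := by
    intro i hi
    rcases (hc i hi).eq_or_lt with h | h
    · rw [hq0 i hi h.symm]
    · exact le_of_lt (hqpos i hi h)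
  have hqrel : ∀ jj, ∑ i ∈ t, q i * (g i jj : ℚ) = 0 := by
    intro jj
    calc ∑ i ∈ t, q i * (g i jj : ℚ)
        = ∑ i ∈ t, ∑ α, T α * (r i α * (g i jj : ℚ)) := by
          refine Finset.sum_congr rfl fun i _ => ?_
          rw [hq]
          dsimp only
          rw [Finset.sum_mul]
          exact Finset.sum_congr rfl fun α _ => by ring
      _ = ∑ α, ∑ i ∈ t, T α * (r i α * (g i jj : ℚ)) := Finset.sum_comm
      _ = 0 := by
          refine Finset.sum_eq_zero fun α _ => ?_
          rw [← Finset.mul_sum, hrq jj α, mul_zero]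
  have hqden : ∀ p : ℚ, p * (p.den : ℚ) = (p.num : ℚ) := Rat.mul_den_eq_num
  set D : κ → ℤ := fun i => (q i).num * ∏ j ∈ t.erase i, ((q j).den : ℤ) with hD
  set S : κ → ℕ := fun i => (D i).toNat with hS
  have hprodpos : ∀ i, (0:ℤ) < ∏ j ∈ t.erase i, ((q j).den : ℤ) :=
    fun i => Finset.prod_pos fun j _ => by exact_mod_cast (q j).pos
  have hSq : ∀ i ∈ t, (S i : ℚ) = q i * ∏ j ∈ t, ((q j).den : ℚ) := by
    intro i hi
    have hnn : 0 ≤ D i :=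
      mul_nonneg (Rat.num_nonneg.mpr (hqnn i hi)) (le_of_lt (hprodpos i))
    have h1 : ((S i : ℤ) : ℚ) = ((D i : ℤ) : ℚ) := by
      rw [hS]; dsimp only; rw [Int.toNat_of_nonneg hnn]
    have h2 : (S i : ℚ) = ((q i).num : ℚ) * ∏ j ∈ t.erase i, ((q j).den : ℚ) := by
      rw [show ((S i : ℕ) : ℚ) = ((S i : ℤ) : ℚ) by push_cast; ring, h1, hD]
      push_cast
      ring
    rw [h2, ← Finset.mul_prod_erase t (fun j => ((q j).den : ℚ)) hi, ← mul_assoc, hqden]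
  have hSpos : ∀ i ∈ t, 0 < c i → 0 < S i := by
    intro i hi hci
    have h1 : 0 < (q i).num := Rat.num_pos.mpr (hqpos i hi hci)
    have h2 : 0 < D i := mul_pos h1 (hprodpos i)
    rw [hS]; dsimp only; omega
  refine ⟨S, hSpos, ?_⟩
  rw [hexp (fun i => (S i : ℝ))]
  have hz : ∀ jj, ∑ i ∈ t, (S i : ℝ) * (g i jj : ℝ) = 0 := by
    intro jj
    have hQ : ∑ i ∈ t, (S i : ℚ) * (g i jj : ℚ) = 0 := by
      calc ∑ i ∈ t, (S i : ℚ) * (g i jj : ℚ)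
          = ∑ i ∈ t, (∏ j ∈ t, ((q j).den : ℚ)) * (q i * (g i jj : ℚ)) := by
            refine Finset.sum_congr rfl fun i hi => ?_
            rw [hSq i hi]; ring
        _ = (∏ j ∈ t, ((q j).den : ℚ)) * ∑ i ∈ t, q i * (g i jj : ℚ) := by
            rw [Finset.mul_sum]
        _ = 0 := by rw [hqrel jj, mul_zero]
    have := congrArg (fun x : ℚ => (x : ℝ)) hQ
    push_cast at this
    exact this
  simp [hz]

section Key
universe u
variable {V : Type u} [AddCommGroup V] [Module ℝ V]

theorem conv_rep {s : Set V} {x : V} (hx : x ∈ convexHull ℝ s) :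
    ∃ (κ : Type) (t : Finset κ) (w : κ → ℝ) (z : κ → V), (∀ i ∈ t, 0 ≤ w i) ∧
      ∑ i ∈ t, w i = 1 ∧ (∀ i ∈ t, z i ∈ s) ∧ ∑ i ∈ t, w i • z i = x := by
  rw [convexHull_eq] at hx
  obtain ⟨κ, t, w, z, hw, hw1, hz, hx⟩ := hx
  exact ⟨κ, t, w, z, hw, hw1, hz, by rwa [Finset.centerMass_eq_of_sum_1 _ _ hw1] at hx⟩

theorem sum_smul_mem_realcone {R : Set V} (hR : IsRealCone R) {κ : Type*} (t : Finset κ)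
    (w : κ → ℝ) (z : κ → V) (hw : ∀ i ∈ t, 0 ≤ w i) (hz : ∀ i ∈ t, 0 < w i → z i ∈ R) :
    ∑ i ∈ t, w i • z i ∈ R := by
  apply hR.isCone.sum_mem
  intro i hi
  rcases (hw i hi).eq_or_lt with h | h
  · rw [← h, zero_smul]; exact hR.1
  · exact hR.2.2 _ (le_of_lt h) _ (hz i hi h)

variable {ι : Type*} [Fintype ι] (b : Module.Basis ι ℝ V)

theorem key_lemma {σ τ : Set V} (hσ : IsCone σ)
    (hσL : σ ⊆ (Submodule.span ℤ (Set.range ⇑b) : Set V))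
    (hτ : IsFace σ τ) {κ : Type*} (t : Finset κ) (w : κ → ℝ) (z : κ → V)
    (hw : ∀ i ∈ t, 0 ≤ w i) (hz : ∀ i ∈ t, z i ∈ σ)
    (hmem : ∑ i ∈ t, w i • z i ∈ convexHull ℝ τ) :
    ∀ i ∈ t, 0 < w i → z i ∈ τ := by
  classical
  obtain ⟨κ', t', w', z', hw', hw1', hz', hsum'⟩ := conv_rep hmem
  have hτc : IsCone τ := hσ.face hτ
  have hrel : ∑ p ∈ t.disjSum t', (Sum.elim w w' p) • (Sum.elim z (fun k => -z' k) p) = 0 := by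
    rw [Finset.sum_disjSum]
    simp only [Sum.elim_inl, Sum.elim_inr, smul_neg, Finset.sum_neg_distrib]
    rw [hsum']
    exact add_neg_cancel _
  have hv : ∀ p ∈ t.disjSum t', Sum.elim z (fun k => -z' k) p
      ∈ (Submodule.span ℤ (Set.range ⇑b) : Set V) := by
    rintro (i | k) hp
    · exact hσL (hz i ((Finset.inl_mem_disjSum).mp hp))
    · exact (Submodule.span ℤ (Set.range ⇑b)).neg_mem
        (hσL (hτ.2.1 (hz' k ((Finset.inr_mem_disjSum).mp hp))))
  have hcnn : ∀ p ∈ t.disjSum t', 0 ≤ Sum.elim w w' p := by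
    rintro (i | k) hp
    · exact hw i ((Finset.inl_mem_disjSum).mp hp)
    · exact hw' k ((Finset.inr_mem_disjSum).mp hp)
  obtain ⟨S, hSpos, hSrel⟩ := rat_relation b (t.disjSum t') _ hv _ hcnn hrel
  rw [Finset.sum_disjSum] at hSrel
  simp only [Sum.elim_inl, Sum.elim_inr, smul_neg, Finset.sum_neg_distrib] at hSrel
  have hmain : ∑ i ∈ t, S (Sum.inl i) • z i = ∑ k ∈ t', S (Sum.inr k) • z' k := by
    have h1 : ∑ i ∈ t, (S (Sum.inl i) : ℝ) • z i = ∑ k ∈ t', (S (Sum.inr k) : ℝ) • z' k := by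
      rwa [add_neg_eq_zero] at hSrel
    calc ∑ i ∈ t, S (Sum.inl i) • z i = ∑ i ∈ t, (S (Sum.inl i) : ℝ) • z i :=
          Finset.sum_congr rfl fun i _ => (Nat.cast_smul_eq_nsmul ℝ _ _).symm
      _ = ∑ k ∈ t', (S (Sum.inr k) : ℝ) • z' k := h1
      _ = ∑ k ∈ t', S (Sum.inr k) • z' k :=
          Finset.sum_congr rfl fun k _ => Nat.cast_smul_eq_nsmul ℝ _ _
  have hRmem : ∑ k ∈ t', S (Sum.inr k) • z' k ∈ τ :=
    hτc.sum_mem fun k hk => hτc.nsmul_mem (hz' k hk) _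
  have hall := hτ.sum_mem hσ (f := fun i => S (Sum.inl i) • z i)
    (fun i hi => hσ.nsmul_mem (hz i hi) _) (by rw [hmain]; exact hRmem)
  intro i hi hwi
  have hSi : 0 < S (Sum.inl i) := hSpos _ (Finset.inl_mem_disjSum.mpr hi) (by simpa using hwi)
  obtain ⟨m, hm⟩ : ∃ m, S (Sum.inl i) = m + 1 := ⟨S (Sum.inl i) - 1, by omega⟩
  have h2 : S (Sum.inl i) • z i ∈ τ := hall i hi
  rw [hm, succ_nsmul] at h2
  exact ((hτ.2.2 _ (hσ.nsmul_mem (hz i hi) m) _ (hz i hi)).mp h2).2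

theorem face_convexHull {σ τ : Set V} (hσ : IsCone σ)
    (hσL : σ ⊆ (Submodule.span ℤ (Set.range ⇑b) : Set V)) (hτ : IsFace σ τ) :
    IsFace (convexHull ℝ σ) (convexHull ℝ τ) := by
  have hτc : IsCone τ := hσ.face hτ
  have hRτ : IsRealCone (convexHull ℝ τ) := hτc.realCone_convexHull
  refine ⟨⟨0, hRτ.1⟩, convexHull_mono hτ.2.1, fun a ha b' hb' => ?_⟩
  constructor
  · intro hab
    obtain ⟨κ₁, t₁, w₁, z₁, hw₁, h1₁, hz₁, hx₁⟩ := conv_rep ha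
    obtain ⟨κ₂, t₂, w₂, z₂, hw₂, h1₂, hz₂, hx₂⟩ := conv_rep hb'
    have hsum : ∑ p ∈ t₁.disjSum t₂, (Sum.elim w₁ w₂ p) • (Sum.elim z₁ z₂ p) = a + b' := by
      rw [Finset.sum_disjSum]
      simp only [Sum.elim_inl, Sum.elim_inr]
      rw [hx₁, hx₂]
    have hkey := key_lemma b hσ hσL hτ (t₁.disjSum t₂) (Sum.elim w₁ w₂) (Sum.elim z₁ z₂)
      (by rintro (i | k) hp
          · exact hw₁ i (Finset.inl_mem_disjSum.mp hp)
          · exact hw₂ k (Finset.inr_mem_disjSum.mp hp))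
      (by rintro (i | k) hp
          · exact hz₁ i (Finset.inl_mem_disjSum.mp hp)
          · exact hz₂ k (Finset.inr_mem_disjSum.mp hp))
      (by rw [hsum]; exact hab)
    constructor
    · rw [← hx₁]
      refine sum_smul_mem_realcone hRτ t₁ w₁ z₁ hw₁ fun i hi hpos => ?_
      exact subset_convexHull ℝ τ (hkey (Sum.inl i) (Finset.inl_mem_disjSum.mpr hi)
        (by simpa using hpos))
    · rw [← hx₂]
      refine sum_smul_mem_realcone hRτ t₂ w₂ z₂ hw₂ fun k hk hpos => ?_
      exact subset_convexHull ℝ τ (hkey (Sum.inr k) (Finset.inr_mem_disjSum.mpr hk)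
        (by simpa using hpos))
  · rintro ⟨ha', hb''⟩
    exact hRτ.2.1 _ ha' _ hb''

theorem realface_inter {σ : Set V} (hσ : IsCone σ) {ν : Set V}
    (hν : IsFace (convexHull ℝ σ) ν) :
    IsFace σ (σ ∩ ν) ∧ ν = convexHull ℝ (σ ∩ ν) := by
  have hRσ : IsRealCone (convexHull ℝ σ) := hσ.realCone_convexHull
  have hRν : IsRealCone ν := hRσ.face hν
  have hface : IsFace σ (σ ∩ ν) := by
    refine ⟨⟨0, hσ.1, hν.zero_mem' hRσ.1⟩, Set.inter_subset_left, fun a ha b hb => ?_⟩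
    have h1 := hν.2.2 a (subset_convexHull ℝ σ ha) b (subset_convexHull ℝ σ hb)
    simp only [Set.mem_inter_iff]
    constructor
    · rintro ⟨-, hab⟩
      obtain ⟨ha', hb'⟩ := h1.mp hab
      exact ⟨⟨ha, ha'⟩, ⟨hb, hb'⟩⟩
    · rintro ⟨⟨-, ha'⟩, ⟨-, hb'⟩⟩
      exact ⟨hσ.2 a ha b hb, h1.mpr ⟨ha', hb'⟩⟩
  have hconeInt : IsCone (σ ∩ ν) := hσ.face hface
  refine ⟨hface, subset_antisymm ?_ (convexHull_min Set.inter_subset_right hRν.convex)⟩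
  intro y hy
  have hyσ : y ∈ convexHull ℝ σ := hν.2.1 hy
  obtain ⟨κ, t, w, z, hw, hw1, hz, hx⟩ := conv_rep hyσ
  have hterm := hν.sum_mem hRσ.isCone (f := fun i => w i • z i)
    (fun i hi => hRσ.2.2 _ (hw i hi) _ (subset_convexHull ℝ σ (hz i hi)))
    (by rw [hx]; exact hy)
  rw [← hx]
  refine sum_smul_mem_realcone hconeInt.realCone_convexHull t w z hw fun i hi hpos => ?_
  refine subset_convexHull ℝ _ ⟨hz i hi, ?_⟩
  have := hRν.2.2 (w i)⁻¹ (le_of_lt (inv_pos.mpr hpos)) _ (hterm i hi)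
  rwa [inv_smul_smul₀ (ne_of_gt hpos)] at this

end Key

section PartB
variable {V : Type*} [AddCommGroup V] [Module ℝ V]

theorem inter_face_aux (Lset : Set V)
    {τ₁ τ₂ σ₁ σ₂ : Set V} (hτ₁ : IsRealCone τ₁)
    (h12 : IsFace τ₁ (τ₁ ∩ τ₂))
    (hf₁ : IsFace (τ₁ ∩ Lset) σ₁) (hf₂ : IsFace (τ₂ ∩ Lset) σ₂)
    (h01 : (0:V) ∈ σ₁) (h02 : (0:V) ∈ σ₂) :
    IsFace σ₁ (σ₁ ∩ σ₂) := by
  refine ⟨⟨0, h01, h02⟩, Set.inter_subset_left, fun a ha b hb => ?_⟩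
  have haT : a ∈ τ₁ ∩ Lset := hf₁.2.1 ha
  have hbT : b ∈ τ₁ ∩ Lset := hf₁.2.1 hb
  constructor
  · rintro ⟨hab1, hab2⟩
    have hab2' : a + b ∈ τ₂ ∩ Lset := hf₂.2.1 hab2
    have habτ : a + b ∈ τ₁ ∩ τ₂ := ⟨hτ₁.2.1 a haT.1 b hbT.1, hab2'.1⟩
    have h' := (h12.2.2 a haT.1 b hbT.1).mp habτ
    have haT2 : a ∈ τ₂ ∩ Lset := ⟨h'.1.2, haT.2⟩
    have hbT2 : b ∈ τ₂ ∩ Lset := ⟨h'.2.2, hbT.2⟩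
    have h'' := (hf₂.2.2 a haT2 b hbT2).mp hab2
    exact ⟨⟨ha, h''.1⟩, ⟨hb, h''.2⟩⟩
  · rintro ⟨⟨ha1, ha2⟩, ⟨hb1, hb2⟩⟩
    refine ⟨(hf₁.2.2 a haT b hbT).mpr ⟨ha1, hb1⟩, ?_⟩
    exact (hf₂.2.2 a (hf₂.2.1 ha2) b (hf₂.2.1 hb2)).mpr ⟨ha2, hb2⟩

end PartB

/-- (a) the realification of an integral cofan is a real cofan;
(b) the faces of the integral cones `τ ∩ L`, for `τ` in a real fan, form an
integral fan in `L`. -/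
theorem stmt17
    {V : Type*} [AddCommGroup V] [Module ℝ V] [FiniteDimensional ℝ V]
    {ι : Type*} [Fintype ι] (b : Module.Basis ι ℝ V)
    (Lset : Set V) (hL : Lset = (Submodule.span ℤ (Set.range ⇑b) : Set V)) :
    -- (a)
    (∀ C : Set (Set V), (∀ σ ∈ C, σ ⊆ Lset) → IsCofan C →
      IsRealCofan (Set.image (convexHull ℝ) C)) ∧
    -- (b)
    (∀ Δ : Set (Set V), IsRealFan Δ →
      IsIntegralFan {τ' : Set V | ∃ τ ∈ Δ, IsFace (τ ∩ Lset) τ'} ∧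
      ∀ τ' ∈ {τ' : Set V | ∃ τ ∈ Δ, IsFace (τ ∩ Lset) τ'}, τ' ⊆ Lset) := by
  subst hL
  constructor
  · -- part (a)
    intro C hCL hC
    refine ⟨?_, ?_, ?_⟩
    · rintro μ ⟨σ, hσC, rfl⟩
      exact (hC.1 σ hσC).realCone_convexHull
    · rintro μ ⟨σ, hσC, rfl⟩ ν hν
      have hσ := hC.1 σ hσC
      obtain ⟨hface, hνeq⟩ := realface_inter hσ hν
      refine ⟨σ - (σ ∩ ν), hC.2.1 σ hσC _ hface, ?_⟩
      rw [convexHull_sub, ← hνeq]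
    · rintro μ ⟨σ, hσC, rfl⟩ μ' ⟨σ', hσ'C, rfl⟩
      obtain ⟨τ, hτ, heq⟩ := hC.2.2 σ hσC σ' hσ'C
      refine ⟨convexHull ℝ τ, face_convexHull b (hC.1 σ hσC) (hCL σ hσC) hτ, ?_⟩
      rw [← convexHull_add, heq, convexHull_sub]
  · -- part (b)
    intro Δ hΔ
    have hLcone : ∀ τ ∈ Δ, IsCone (τ ∩ (Submodule.span ℤ (Set.range ⇑b) : Set V)) := by
      intro τ hτ
      have h := hΔ.1 τ hτ
      exact ⟨⟨h.1, Submodule.zero_mem _⟩, fun a ha b' hb' =>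
        ⟨h.2.1 a ha.1 b' hb'.1, Submodule.add_mem _ ha.2 hb'.2⟩⟩
    refine ⟨⟨?_, ?_, ?_⟩, ?_⟩
    · rintro σ ⟨τ, hτΔ, hface⟩
      exact (hLcone τ hτΔ).face hface
    · rintro σ ⟨τ, hτΔ, hface⟩ τ' hτ'
      exact ⟨τ, hτΔ, hface.trans hτ'⟩
    · rintro σ₁ ⟨τ₁, hτ₁Δ, hf₁⟩ σ₂ ⟨τ₂, hτ₂Δ, hf₂⟩
      have h01 : (0:V) ∈ σ₁ := ((hLcone τ₁ hτ₁Δ).face hf₁).1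
      have h02 : (0:V) ∈ σ₂ := ((hLcone τ₂ hτ₂Δ).face hf₂).1
      have hint := hΔ.2.2 τ₁ hτ₁Δ τ₂ hτ₂Δ
      constructor
      · exact inter_face_aux _ (hΔ.1 τ₁ hτ₁Δ) hint.1 hf₁ hf₂ h01 h02
      · have h21 : IsFace τ₂ (τ₂ ∩ τ₁) := by rw [Set.inter_comm]; exact hint.2
        have := inter_face_aux _ (hΔ.1 τ₂ hτ₂Δ) h21 hf₂ hf₁ h02 h01
        rwa [Set.inter_comm] at this
    · rintro σ ⟨τ, hτΔ, hface⟩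
      exact hface.2.1.trans Set.inter_subset_right
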